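/- Under the extended ordering invariant, if A[i].val <_i v for some cell i, then for all cells j cyclically strictly between i and h(v) (i.e., i+1 ≤ j ≤ h(v)−1), A[j].val <_j v, and for all i ≤ j ≤ h(v)−1, A[j].next <_j v or h(A[j].next) = j+1. -/

import Mathlib

/-- The rank of `v` at cell `i`: the cyclic distance `(i - h v) mod m`. -/
def rnk {U : Type*} {m : ℕ} (h : U → Fin m) (v : U) (i : Fin m) : ℕ :=
  ((i : ℕ) + m - (h v : ℕ)) % m

/-- Cyclic distance from `a` to `b`, going forward, modulo `m`. -/
def cdist {m : ℕ} (a b : Fin m) : ℕ :=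
  ((b : ℕ) + m - (a : ℕ)) % m

/-- Robin Hood priority: `a >_i b` iff `rank(a,i) > rank(b,i)`, or equal ranks and `a > b`. -/
def prioGT {U : Type*} [LinearOrder U] {m : ℕ} (h : U → Fin m) (i : Fin m) (a b : U) : Prop :=
  rnk h a i > rnk h b i ∨ (rnk h a i = rnk h b i ∧ a > b)

/-- Priority extended to `Option U`: `none` is strictly below every `some v`. -/
def oGT {U : Type*} [LinearOrder U] {m : ℕ} (h : U → Fin m) (i : Fin m) :
    Option U → Option U → Prop
  | some a, some b => prioGT h i a b
  | some _, none => True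
  | none, _ => False

/-- `x ≥_i y` : strictly higher priority, or equal. -/
def oGE {U : Type*} [LinearOrder U] {m : ℕ} (h : U → Fin m) (i : Fin m)
    (x y : Option U) : Prop :=
  oGT h i x y ∨ x = y

/-- The Robin Hood ordering invariant: if `v` is stored at cell `i`, then every cell `j`
on the cyclic interval from `h v` to `i` (exclusive of `i`) stores a value of priority
at least that of `v` at cell `j`. -/
def OrdInv {U : Type*} [LinearOrder U] {m : ℕ} (h : U → Fin m) (A : Fin m → Option U) : Prop :=
  ∀ i v, A i = some v → ∀ j, cdist (h v) j < cdist (h v) i → oGE h j (A j) (some v)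

/-- Cell marks: stable, insert in progress, delete in progress. -/
inductive Mark
  | S | I | D
deriving DecidableEq

/-- A table cell: (value slot, lookahead slot, mark). -/
abbrev Cell (U : Type*) := Option U × Option U × Mark

/-- The extended ordering invariant for a table with lookahead. -/
def ExtInv {U : Type*} [LinearOrder U] {m : ℕ} [NeZero m] (h : U → Fin m)
    (A : Fin m → Cell U) : Prop :=
  -- (a) ordering invariant for the value slots
  (∀ i v, (A i).1 = some v → ∀ j, cdist (h v) j < cdist (h v) i →
    oGE h j ((A j).1) (some v)) ∧
  -- (b) A[i].next ≥_{i+1} A[i+1].val, or h(A[i].next) = i+1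
  (∀ i : Fin m, oGE h (i + 1) ((A i).2.1) ((A (i + 1)).1) ∨
    (∃ w, (A i).2.1 = some w ∧ h w = i + 1)) ∧
  -- (c) A[i].val ≥_i A[i].next, or (h(A[i].next) = i+1 and A[i].next ≥_{i+1} A[i+1].val)
  (∀ i : Fin m, oGE h i ((A i).1) ((A i).2.1) ∨
    ((∃ w, (A i).2.1 = some w ∧ h w = i + 1) ∧
      oGE h (i + 1) ((A i).2.1) ((A (i + 1)).1)))

/-- The (relevant part of the) stability invariant: a stable cell's lookahead slot
agrees with the value slot of the next cell. -/
def StableInv {U : Type*} {m : ℕ} [NeZero m] (A : Fin m → Cell U) : Prop :=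
  ∀ i : Fin m, (A i).2.2 = Mark.S → (A i).2.1 = (A (i + 1)).1

/-- `v` is physically in the table: some cell's value or lookahead slot equals `v`. -/
def physIn {U : Type*} {m : ℕ} (A : Fin m → Cell U) (v : U) : Prop :=
  ∃ i : Fin m, (A i).1 = some v ∨ (A i).2.1 = some v

/-- `v` is logically in the table. -/
def logIn {U : Type*} [LinearOrder U] {m : ℕ} (h : U → Fin m)
    (A : Fin m → Cell U) (v : U) : Prop :=
  ∃ i : Fin m, (A i).1 = some v ∨
    ((A i).2.1 = some v ∧ oGE h i ((A i).1) (some v))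

section Helpers

variable {U : Type*} [LinearOrder U] {m : ℕ}

lemma cdist_eq (a b : Fin m) :
    cdist a b = if (a : ℕ) ≤ (b : ℕ) then (b : ℕ) - a else (b : ℕ) + m - a := by
  have ha := a.isLt; have hb := b.isLt
  unfold cdist
  split_ifs with hc
  · have he : (b : ℕ) + m - a = ((b : ℕ) - a) + m := by omega
    rw [he, Nat.add_mod_right, Nat.mod_eq_of_lt (by omega)]
  · rw [Nat.mod_eq_of_lt (by omega)]

lemma rnk_eq_cdist (h : U → Fin m) (v : U) (i : Fin m) : rnk h v i = cdist (h v) i := rfl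

lemma sub_one_val [NeZero m] (x : Fin m) :
    ((x - 1 : Fin m) : ℕ) = if (x : ℕ) = 0 then m - 1 else (x : ℕ) - 1 := by
  have hm : 0 < m := Nat.pos_of_ne_zero (NeZero.ne m)
  have hx := x.isLt
  rw [Fin.sub_def]
  simp only [Fin.val_one']
  rcases eq_or_lt_of_le (show 1 ≤ m from hm) with h1 | h1
  · have hm1 : m = 1 := h1.symm
    subst hm1
    have hx0 : (x : ℕ) = 0 := by omega
    simp [hx0]
  · have h1m : (1 : ℕ) % m = 1 := Nat.mod_eq_of_lt h1
    rw [h1m]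
    split_ifs with h0
    · rw [h0, Nat.add_zero, Nat.mod_eq_of_lt (by omega)]
    · have he : m - 1 + (x : ℕ) = ((x : ℕ) - 1) + m := by omega
      rw [he, Nat.add_mod_right, Nat.mod_eq_of_lt (by omega)]

lemma cdist_left_inj {a a' b : Fin m} (hcd : cdist a b = cdist a' b) : a = a' := by
  have h1 := a.isLt; have h2 := a'.isLt; have h3 := b.isLt
  rw [cdist_eq, cdist_eq] at hcd
  apply Fin.ext
  split_ifs at hcd <;> omega

lemma cdist_self_zero {a b : Fin m} (hz : cdist a b = 0) : a = b := by
  have h1 := a.isLt; have h2 := b.isLt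
  rw [cdist_eq] at hz
  apply Fin.ext
  split_ifs at hz <;> omega

lemma arith_main [NeZero m] (hv i j : Fin m) (hd : cdist i j ≤ cdist i (hv - 1)) :
    cdist hv j = cdist hv i + cdist i j := by
  have h1 := hv.isLt; have h2 := i.isLt; have h3 := j.isLt
  have hm : 0 < m := Nat.pos_of_ne_zero (NeZero.ne m)
  rw [cdist_eq i j, cdist_eq i (hv - 1), sub_one_val] at hd
  rw [cdist_eq, cdist_eq, cdist_eq]
  split_ifs at hd ⊢ <;> omega

lemma arith_back (a i j : Fin m) (hle : cdist i j ≤ cdist a j) :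
    cdist a i = cdist a j - cdist i j := by
  have h1 := a.isLt; have h2 := i.isLt; have h3 := j.isLt
  rw [cdist_eq, cdist_eq] at hle
  rw [cdist_eq, cdist_eq, cdist_eq]
  split_ifs at hle ⊢ <;> omega

lemma prioGT_trans {h : U → Fin m} {i : Fin m} {a b c : U}
    (h1 : prioGT h i a b) (h2 : prioGT h i b c) : prioGT h i a c := by
  rcases h1 with h1 | ⟨e1, l1⟩ <;> rcases h2 with h2 | ⟨e2, l2⟩
  · exact Or.inl (lt_trans h2 h1)
  · exact Or.inl (e2 ▸ h1)
  · exact Or.inl (e1 ▸ h2)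
  · exact Or.inr ⟨e1.trans e2, lt_trans l2 l1⟩

lemma oGT_trans {h : U → Fin m} {i : Fin m} : ∀ {x y z : Option U},
    oGT h i x y → oGT h i y z → oGT h i x z := by
  intro x y z h1 h2
  cases x with
  | none => exact absurd h1 (by cases y <;> simp [oGT])
  | some a =>
    cases y with
    | none => exact absurd h2 (by cases z <;> simp [oGT])
    | some b =>
      cases z with
      | none => trivial
      | some c =>
        show prioGT h i a c
        exact prioGT_trans h1 h2

lemma oGT_oGE_trans {h : U → Fin m} {i : Fin m} {x y z : Option U}
    (h1 : oGT h i x y) (h2 : oGE h i y z) : oGT h i x z := by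
  rcases h2 with h2 | rfl
  · exact oGT_trans h1 h2
  · exact h1

lemma oGE_or_oGT (h : U → Fin m) (j : Fin m) (x : Option U) (v : U) :
    oGE h j x (some v) ∨ oGT h j (some v) x := by
  cases x with
  | none => exact Or.inr trivial
  | some u =>
    simp only [oGE, oGT, prioGT, Option.some_inj]
    rcases lt_trichotomy (rnk h u j) (rnk h v j) with hr | hr | hr
    · exact Or.inr (Or.inl hr)
    · rcases lt_trichotomy u v with hu | rfl | hu
      · exact Or.inr (Or.inr ⟨hr.symm, hu⟩)
      · exact Or.inl (Or.inr rfl)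
      · exact Or.inl (Or.inl (Or.inr ⟨hr, hu⟩))
    · exact Or.inl (Or.inl (Or.inl hr))

lemma oGE_some {h : U → Fin m} {i : Fin m} {x : Option U} {u : U}
    (hge : oGE h i x (some u)) : ∃ w, x = some w := by
  cases x with
  | none =>
    rcases hge with hge | hge
    · exact absurd hge (by simp [oGT])
    · exact absurd hge (by simp)
  | some w => exact ⟨w, rfl⟩

lemma oGE_rank {h : U → Fin m} {j : Fin m} {u v : U}
    (hge : oGE h j (some u) (some v)) : rnk h v j ≤ rnk h u j := by
  rcases hge with hge | hge
  · rcases hge with hge | ⟨he, _⟩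
    · exact le_of_lt hge
    · exact le_of_eq he.symm
  · rw [Option.some_inj] at hge; rw [hge]

end Helpers

theorem stmt16 {U : Type*} [LinearOrder U] {m : ℕ} [NeZero m] (h : U → Fin m)
    (A : Fin m → Cell U) (hext : ExtInv h A)
    (v : U) (i : Fin m)
    -- A[i].val <_i v
    (hlt : oGT h i (some v) ((A i).1)) :
    -- for all j with i+1 ≤ j ≤ h(v)-1 cyclically, A[j].val <_j v
    (∀ j : Fin m, 1 ≤ cdist i j → cdist i j ≤ cdist i (h v - 1) →
      oGT h j (some v) ((A j).1)) ∧
    -- for all j with i ≤ j ≤ h(v)-1 cyclically, A[j].next <_j v or h(A[j].next) = j+1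
    (∀ j : Fin m, cdist i j ≤ cdist i (h v - 1) →
      oGT h j (some v) ((A j).2.1) ∨ (∃ w, (A j).2.1 = some w ∧ h w = j + 1)) := by
  have key : ∀ j : Fin m, 1 ≤ cdist i j → cdist i j ≤ cdist i (h v - 1) →
      oGT h j (some v) ((A j).1) := by
    intro j h1 h2
    rcases oGE_or_oGT h j ((A j).1) v with hge | hgt
    · exfalso
      obtain ⟨u, hu⟩ := oGE_some hge
      rw [hu] at hge
      have hrj : rnk h v j ≤ rnk h u j := oGE_rank hge
      have hvj : cdist (h v) j = cdist (h v) i + cdist i j := arith_main (h v) i j h2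
      rw [rnk_eq_cdist, rnk_eq_cdist] at hrj
      have hub : cdist i j ≤ cdist (h u) j := by omega
      have hui : cdist (h u) i = cdist (h u) j - cdist i j := arith_back (h u) i j hub
      have hlt' : cdist (h u) i < cdist (h u) j := by omega
      have hinv := hext.1 j u hu i hlt'
      obtain ⟨w, hw⟩ := oGE_some hinv
      rw [hw] at hinv hlt
      have hvu : oGT h i (some v) (some u) := oGT_oGE_trans hlt hinv
      have hrui : cdist (h v) i ≤ cdist (h u) i := by omega
      have hvu' : prioGT h i v u := hvu
      rcases hvu' with hgt' | ⟨heq, hlt2⟩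
      · rw [rnk_eq_cdist, rnk_eq_cdist] at hgt'
        omega
      · rw [rnk_eq_cdist, rnk_eq_cdist] at heq
        have hh : h v = h u := cdist_left_inj heq
        have hge' : prioGT h j u v ∨ (some u : Option U) = some v := hge
        rcases hge' with hp | hp
        · rcases hp with hp | ⟨_, hp⟩
          · rw [rnk_eq_cdist, rnk_eq_cdist, hh] at hp
            omega
          · exact absurd hp (not_lt_of_gt hlt2)
        · rw [Option.some_inj] at hp
          rw [hp] at hlt2
          exact lt_irrefl v hlt2
    · exact hgt
  refine ⟨key, ?_⟩
  intro j hd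
  have hvj : oGT h j (some v) ((A j).1) := by
    rcases Nat.eq_zero_or_pos (cdist i j) with h0 | h0
    · have hij : i = j := cdist_self_zero h0
      rwa [← hij]
    · exact key j h0 hd
  rcases hext.2.2 j with hc | ⟨hw, _⟩
  · exact Or.inl (oGT_oGE_trans hvj hc)
  · exact Or.inr hw
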